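/- The set of regular values of the moment map μ : ℂ^n × ℂ^n → (𝔱^k)^*, i.e. the set of λ ∈ (𝔱^k)^* such that the derivative of μ is surjective at every point of μ^{-1}(λ), is open and dense in the finite-dimensional complex vector space (𝔱^k)^*. -/

import Mathlib

open scoped BigOperators

set_option maxHeartbeats 1000000
set_option synthInstance.maxHeartbeats 1000000

noncomputable section

/-- `𝔱^k = ker (A : ℂ^n → ℂ^d)`. -/
def tkLie {d n : ℕ} (A : Matrix (Fin d) (Fin n) ℤ) : Submodule ℂ (Fin n → ℂ) :=
  LinearMap.ker (Matrix.mulVecLin (A.map (Int.cast : ℤ → ℂ)))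

/-- The linear functional `x ↦ Σ_i z_i w_i x_i` on `𝔱^k`. -/
def muL {d n : ℕ} (A : Matrix (Fin d) (Fin n) ℤ) (z w : Fin n → ℂ) :
    Module.Dual ℂ (tkLie A) :=
  ∑ i : Fin n, (z i * w i) •
    ((LinearMap.proj (R := ℂ) (φ := fun _ : Fin n => ℂ) i).comp (tkLie A).subtype)

/-- The moment map `μ : ℂ^n × ℂ^n → (𝔱^k)^*`, `μ(z,w)(x) = Σ_i z_i w_i x_i`, with values in
the dual of `𝔱^k` (realized as the continuous dual, which carries the standard topology of a
finite-dimensional complex vector space). -/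
def muMap {d n : ℕ} (A : Matrix (Fin d) (Fin n) ℤ) :
    (Fin n → ℂ) × (Fin n → ℂ) → (tkLie A →L[ℂ] ℂ) :=
  fun p => LinearMap.toContinuousLinearMap (muL A p.1 p.2)

/-- `λ` is a regular value of `μ` if the derivative of `μ` is surjective at every point of
`μ⁻¹(λ)`. -/
def IsRegularValue {d n : ℕ} (A : Matrix (Fin d) (Fin n) ℤ) (lam : tkLie A →L[ℂ] ℂ) : Prop :=
  ∀ p : (Fin n → ℂ) × (Fin n → ℂ), muMap A p = lam →
    Function.Surjective (fderiv ℂ (muMap A) p)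

namespace Stmt7Aux

variable {d n : ℕ} (A : Matrix (Fin d) (Fin n) ℤ)

instance (V : Submodule ℂ (Fin n → ℂ)) : ContinuousAdd (V →L[ℂ] ℂ) :=
  (inferInstance : IsTopologicalAddGroup (V →L[ℂ] ℂ)).toContinuousAdd

instance (V : Submodule ℂ (Fin n → ℂ)) : ContinuousConstSMul ℂ (V →L[ℂ] ℂ) :=
  (inferInstance : ContinuousSMul ℂ (V →L[ℂ] ℂ)).continuousConstSMul

instance acgInst (V : Submodule ℂ (Fin n → ℂ)) : AddCommGroup (V →L[ℂ] ℂ) :=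
  ContinuousLinearMap.addCommGroup

lemma dense_iInter_of_isOpen_finite {X ι : Type*} [TopologicalSpace X] [Finite ι]
    (f : ι → Set X) (ho : ∀ i, IsOpen (f i)) (hd : ∀ i, Dense (f i)) : Dense (⋂ i, f i) := by
  classical
  cases nonempty_fintype ι
  have h : (⋂ i, f i) = ⋂ i ∈ (Finset.univ : Finset ι), f i := by simp
  rw [h]
  induction (Finset.univ : Finset ι) using Finset.induction_on with
  | empty => simpa using dense_univ
  | insert _ _ hnot ih =>
    rw [Finset.set_biInter_insert]
    exact (hd _).inter_of_isOpen_left ih (ho _)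

instance fdInst : FiniteDimensional ℂ (tkLie A →L[ℂ] ℂ) :=
  Module.Finite.equiv
    (LinearMap.toContinuousLinearMap : (tkLie A →ₗ[ℂ] ℂ) ≃ₗ[ℂ] (tkLie A →L[ℂ] ℂ))

instance csInst : CompleteSpace (tkLie A →L[ℂ] ℂ) := FiniteDimensional.complete ℂ _

def phiF (i : Fin n) : tkLie A →L[ℂ] ℂ :=
  LinearMap.toContinuousLinearMap
    ((LinearMap.proj (R := ℂ) (φ := fun _ : Fin n => ℂ) i).comp (tkLie A).subtype)

lemma muMap_eq (p : (Fin n → ℂ) × (Fin n → ℂ)) :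
    muMap A p = ∑ i : Fin n, (p.1 i * p.2 i) • phiF A i := by
  simp only [muMap, muL, phiF, map_sum, map_smul]

def dMu (p : (Fin n → ℂ) × (Fin n → ℂ)) :
    ((Fin n → ℂ) × (Fin n → ℂ)) →L[ℂ] (tkLie A →L[ℂ] ℂ) :=
  ∑ i : Fin n,
    ((p.1 i • ((ContinuousLinearMap.proj i).comp
        (ContinuousLinearMap.snd ℂ (Fin n → ℂ) (Fin n → ℂ)))
      + p.2 i • ((ContinuousLinearMap.proj i).comp
        (ContinuousLinearMap.fst ℂ (Fin n → ℂ) (Fin n → ℂ)))).smulRight (phiF A i))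

lemma dMu_apply (p q : (Fin n → ℂ) × (Fin n → ℂ)) :
    dMu A p q = ∑ i : Fin n, (p.1 i * q.2 i + p.2 i * q.1 i) • phiF A i := by
  simp [dMu, ContinuousLinearMap.sum_apply, ContinuousLinearMap.smulRight_apply,
    ContinuousLinearMap.add_apply, ContinuousLinearMap.smul_apply, smul_eq_mul]

lemma hasFDerivAt_muMap (p : (Fin n → ℂ) × (Fin n → ℂ)) :
    HasFDerivAt (muMap A) (dMu A p) p := by
  have h : (muMap A) = fun q : (Fin n → ℂ) × (Fin n → ℂ) =>
      ∑ i : Fin n, (q.1 i * q.2 i) • phiF A i := funext (muMap_eq A)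
  rw [h, dMu]
  refine HasFDerivAt.fun_sum (𝕜 := ℂ) (u := Finset.univ)
    (A := fun i (q : (Fin n → ℂ) × (Fin n → ℂ)) => (q.1 i * q.2 i) • phiF A i) (fun i _ => ?_)
  have hc : HasFDerivAt (fun q : (Fin n → ℂ) × (Fin n → ℂ) => q.1 i)
      ((ContinuousLinearMap.proj i).comp
        (ContinuousLinearMap.fst ℂ (Fin n → ℂ) (Fin n → ℂ))) p :=
    ((ContinuousLinearMap.proj i).comp
      (ContinuousLinearMap.fst ℂ (Fin n → ℂ) (Fin n → ℂ))).hasFDerivAt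
  have hd : HasFDerivAt (fun q : (Fin n → ℂ) × (Fin n → ℂ) => q.2 i)
      ((ContinuousLinearMap.proj i).comp
        (ContinuousLinearMap.snd ℂ (Fin n → ℂ) (Fin n → ℂ))) p :=
    ((ContinuousLinearMap.proj i).comp
      (ContinuousLinearMap.snd ℂ (Fin n → ℂ) (Fin n → ℂ))).hasFDerivAt
  haveI : IsBoundedSMul ℂ (tkLie A →L[ℂ] ℂ) :=
    NormedSpace.toIsBoundedSMul (𝕜 := ℂ) (E := tkLie A →L[ℂ] ℂ)
  exact (hc.mul hd).smul_const (phiF A i)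

lemma fderiv_muMap (p : (Fin n → ℂ) × (Fin n → ℂ)) :
    fderiv ℂ (muMap A) p = dMu A p := (hasFDerivAt_muMap A p).fderiv

/-- support of p -/
def Sp (p : (Fin n → ℂ) × (Fin n → ℂ)) : Set (Fin n) := {i | p.1 i ≠ 0 ∨ p.2 i ≠ 0}

/-- subspace spanned by coordinates in S -/
def V (S : Set (Fin n)) : Submodule ℂ (tkLie A →L[ℂ] ℂ) :=
  Submodule.span ℂ (phiF A '' S)

lemma mu_mem (p : (Fin n → ℂ) × (Fin n → ℂ)) : muMap A p ∈ V A (Sp p) := by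
  rw [muMap_eq]
  apply Submodule.sum_mem
  intro i _
  by_cases hi : i ∈ Sp p
  · exact Submodule.smul_mem _ _ (Submodule.subset_span ⟨i, hi, rfl⟩)
  · have h1 : p.1 i = 0 := by
      by_contra h; exact hi (Or.inl h)
    have h0 : (p.1 i * p.2 i) • phiF A i = (0 : tkLie A →L[ℂ] ℂ) := by
      rw [h1, zero_mul]; exact zero_smul ℂ (phiF A i)
    rw [h0]
    exact Submodule.zero_mem _

lemma surj_iff (p : (Fin n → ℂ) × (Fin n → ℂ)) :
    Function.Surjective (fderiv ℂ (muMap A) p) ↔ V A (Sp p) = ⊤ := by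
  rw [fderiv_muMap]
  constructor
  · intro hsurj
    refine top_unique ?_
    intro f _
    obtain ⟨q, hq⟩ := hsurj f
    rw [← hq, dMu_apply]
    apply Submodule.sum_mem
    intro i _
    by_cases hi : i ∈ Sp p
    · exact Submodule.smul_mem _ _ (Submodule.subset_span ⟨i, hi, rfl⟩)
    · have h1 : p.1 i = 0 := by by_contra h; exact hi (Or.inl h)
      have h2 : p.2 i = 0 := by by_contra h; exact hi (Or.inr h)
      have h0 : (p.1 i * q.2 i + p.2 i * q.1 i) • phiF A i = (0 : tkLie A →L[ℂ] ℂ) := by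
        rw [h1, h2, zero_mul, zero_mul, add_zero]; exact zero_smul ℂ (phiF A i)
      rw [h0]
      exact Submodule.zero_mem _
  · intro htop f
    have hf : f ∈ V A (Sp p) := htop ▸ Submodule.mem_top
    have hle : V A (Sp p) ≤ LinearMap.range (dMu A p).toLinearMap := by
      rw [V, Submodule.span_le]
      rintro _ ⟨i, hi, rfl⟩
      rcases hi with h1 | h2
      · refine ⟨((0 : Fin n → ℂ), Pi.single i (p.1 i)⁻¹), ?_⟩
        calc dMu A p ((0 : Fin n → ℂ), Pi.single i (p.1 i)⁻¹)
            = ∑ j : Fin n, (p.1 j * (Pi.single i (p.1 i)⁻¹ : Fin n → ℂ) j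
                + p.2 j * (0 : Fin n → ℂ) j) • phiF A j := dMu_apply A p _
          _ = ∑ j : Fin n, (if j = i then phiF A i else 0) := by
              refine Finset.sum_congr rfl fun j _ => ?_
              by_cases hj : j = i
              · subst hj
                have hc : p.1 j * (Pi.single j (p.1 j)⁻¹ : Fin n → ℂ) j
                    + p.2 j * (0 : Fin n → ℂ) j = 1 := by
                  simp [mul_inv_cancel₀ h1]
                rw [if_pos rfl, hc]
                exact one_smul ℂ (phiF A j)
              · have hc : p.1 j * (Pi.single i (p.1 i)⁻¹ : Fin n → ℂ) j
                    + p.2 j * (0 : Fin n → ℂ) j = 0 := by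
                  simp [Pi.single_eq_of_ne hj]
                rw [if_neg hj, hc]
                exact zero_smul ℂ (phiF A j)
          _ = phiF A i := by simp
      · refine ⟨(Pi.single i (p.2 i)⁻¹, (0 : Fin n → ℂ)), ?_⟩
        calc dMu A p (Pi.single i (p.2 i)⁻¹, (0 : Fin n → ℂ))
            = ∑ j : Fin n, (p.1 j * (0 : Fin n → ℂ) j
                + p.2 j * (Pi.single i (p.2 i)⁻¹ : Fin n → ℂ) j) • phiF A j := dMu_apply A p _
          _ = ∑ j : Fin n, (if j = i then phiF A i else 0) := by
              refine Finset.sum_congr rfl fun j _ => ?_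
              by_cases hj : j = i
              · subst hj
                have hc : p.1 j * (0 : Fin n → ℂ) j
                    + p.2 j * (Pi.single j (p.2 j)⁻¹ : Fin n → ℂ) j = 1 := by
                  simp [mul_inv_cancel₀ h2]
                rw [if_pos rfl, hc]
                exact one_smul ℂ (phiF A j)
              · have hc : p.1 j * (0 : Fin n → ℂ) j
                    + p.2 j * (Pi.single i (p.2 i)⁻¹ : Fin n → ℂ) j = 0 := by
                  simp [Pi.single_eq_of_ne hj]
                rw [if_neg hj, hc]
                exact zero_smul ℂ (phiF A j)
          _ = phiF A i := by simp
    exact hle hf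

lemma exists_p (S : Set (Fin n)) (lam : tkLie A →L[ℂ] ℂ) (hlam : lam ∈ V A S) :
    ∃ p : (Fin n → ℂ) × (Fin n → ℂ), muMap A p = lam ∧ Sp p ⊆ S := by
  classical
  rw [V, Finsupp.mem_span_image_iff_linearCombination] at hlam
  obtain ⟨l, hl, hcomb⟩ := hlam
  have hsup : ∀ i, l i ≠ 0 → i ∈ S := fun i h =>
    (Finsupp.mem_supported ℂ l).mp hl (Finset.mem_coe.mpr (Finsupp.mem_support_iff.mpr h))
  set w : Fin n → ℂ := fun i => if i ∈ S then 1 else 0 with hw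
  refine ⟨((fun i => l i), w), ?_, ?_⟩
  · calc muMap A ((fun i => l i), w)
        = ∑ i : Fin n, (l i * w i) • phiF A i := muMap_eq A _
      _ = ∑ i ∈ l.support, (l i * w i) • phiF A i := by
          refine (Finset.sum_subset (Finset.subset_univ _) ?_).symm
          intro i _ hi
          have hz : l i = 0 := Finsupp.notMem_support_iff.mp hi
          have h0 : l i * w i = 0 := by rw [hz, zero_mul]
          rw [h0]
          exact zero_smul ℂ (phiF A i)
      _ = ∑ i ∈ l.support, l i • phiF A i := by
          refine Finset.sum_congr rfl fun i hi => ?_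
          have hiS : i ∈ S := hsup i (Finsupp.mem_support_iff.mp hi)
          have h1 : l i * w i = l i := by simp [hw, hiS]
          rw [h1]
      _ = lam := by
          rw [← hcomb, Finsupp.linearCombination_apply]
          rfl
  · intro i hi
    rcases hi with h1 | h2
    · exact hsup i h1
    · by_contra hiS
      simp [hw, hiS] at h2

end Stmt7Aux

open Stmt7Aux in
/-- The set of regular values of the moment map `μ : ℂ^n × ℂ^n → (𝔱^k)^*` is open and dense
in `(𝔱^k)^*`. -/
theorem stmt7 {d n : ℕ} (hd : 0 < d) (hn : 0 < n) (hdn : d ≤ n) (k : ℕ) (hk : k = n - d)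
    (A : Matrix (Fin d) (Fin n) ℤ)
    (hcols : ∀ i : Fin n, (fun j => A j i) ≠ (0 : Fin d → ℤ))
    (hrank : (A.map (Int.cast : ℤ → ℚ)).rank = d) :
    IsOpen {lam : tkLie A →L[ℂ] ℂ | IsRegularValue A lam} ∧
    Dense {lam : tkLie A →L[ℂ] ℂ | IsRegularValue A lam} := by
  classical
  haveI : FiniteDimensional ℂ (tkLie A →L[ℂ] ℂ) := Stmt7Aux.fdInst A
  have key : {lam : tkLie A →L[ℂ] ℂ | IsRegularValue A lam} =
      ⋂ S ∈ {S : Set (Fin n) | V A S ≠ ⊤}, ((V A S : Set (tkLie A →L[ℂ] ℂ)))ᶜ := by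
    ext lam
    simp only [Set.mem_setOf_eq, Set.mem_iInter, Set.mem_compl_iff, SetLike.mem_coe]
    constructor
    · intro hreg S hS hmem
      obtain ⟨p, hp, hSp⟩ := exists_p A S lam hmem
      have hsurj := hreg p hp
      rw [surj_iff] at hsurj
      have : V A S = ⊤ := top_unique (by
        rw [← hsurj]
        exact Submodule.span_mono (Set.image_mono hSp))
      exact hS this
    · intro h p hp
      rw [surj_iff]
      by_contra hne
      exact h (Sp p) hne (hp ▸ mu_mem A p)
  have hclosed : ∀ S : Set (Fin n), IsClosed ((V A S : Set (tkLie A →L[ℂ] ℂ))) := fun S => by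
    haveI : FiniteDimensional ℂ (V A S) := FiniteDimensional.finiteDimensional_submodule (V A S)
    exact Submodule.closed_of_finiteDimensional _
  constructor
  · rw [key]
    exact Set.Finite.isOpen_biInter (Set.toFinite _)
      (fun S _ => (hclosed S).isOpen_compl)
  · rw [key]
    rw [Set.biInter_eq_iInter]
    refine dense_iInter_of_isOpen_finite _ (fun S => (hclosed S.1).isOpen_compl) ?_
    rintro ⟨S, hS⟩
    simp only
    rw [← interior_eq_empty_iff_dense_compl]
    by_contra hne
    exact hS (Submodule.eq_top_of_nonempty_interior' _
      (Set.nonempty_iff_ne_empty.mpr hne))
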